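/- Let g_ξ be the solution of the Poisson Stein equation λ g(x+1) − x g(x) = 𝟙[x = ξ] − p(ξ) with g(0) = 0. Then sup_{x∈ℕ} |g_ξ(x)| ≤ max( P(ξ−1)/ξ , (1−P(ξ))/λ ), where P is the Poisson(λ) cdf (and P(−1) = 0, with the first term taken as 0 when ξ = 0). -/

import Mathlib

open Real MeasureTheory Set

/-- Poisson(λ) pmf on ℕ. -/
noncomputable def poisPmf (lam : ℝ) (x : ℕ) : ℝ :=
  Real.exp (-lam) * lam ^ x / (Nat.factorial x : ℝ)

/-- Poisson(λ) cdf on ℕ: `P(x) = Σ_{j ≤ x} p(j)`. -/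
noncomputable def poisCdf (lam : ℝ) (x : ℕ) : ℝ :=
  ∑ j ∈ Finset.range (x + 1), poisPmf lam j

private lemma fact_ratio (a b m : ℕ) (h : a ≤ b) :
    b.factorial * (a + m).factorial ≤ a.factorial * (b + m).factorial := by
  induction m with
  | zero => simp [Nat.mul_comm]
  | succ m ih =>
    calc b.factorial * (a + (m+1)).factorial
        = b.factorial * (a + m).factorial * (a + m + 1) := by
          rw [show a + (m+1) = (a+m) + 1 from rfl, Nat.factorial_succ]; ring
      _ ≤ a.factorial * (b + m).factorial * (b + m + 1) := Nat.mul_le_mul ih (by omega)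
      _ = a.factorial * (b + (m+1)).factorial := by
          rw [show b + (m+1) = (b+m) + 1 from rfl, Nat.factorial_succ]; ring

private lemma core1 (lam : ℝ) (hlam : 0 < lam) (y m : ℕ) (h : y ≤ m) :
    (y.factorial : ℝ) * lam^(m+1) * ∑ i ∈ Finset.range (y+1), lam^i/(i.factorial:ℝ)
      ≤ (m.factorial : ℝ) * lam^(y+1) * ∑ j ∈ Finset.range (m+1), lam^j/(j.factorial:ℝ) := by
  set F : ℕ → ℝ := fun j => (m.factorial:ℝ) * lam^(y+1) * (lam^j/(j.factorial:ℝ)) with hF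
  have hFnn : ∀ j, 0 ≤ F j := fun j => by rw [hF]; positivity
  rw [Finset.mul_sum, Finset.mul_sum]
  calc ∑ i ∈ Finset.range (y+1), (y.factorial:ℝ) * lam^(m+1) * (lam^i/(i.factorial:ℝ))
      ≤ ∑ i ∈ Finset.range (y+1), F ((m - y) + i) := by
        apply Finset.sum_le_sum
        intro i hi
        have hiy : i ≤ y := by
          have := Finset.mem_range.mp hi; omega
        have hfr := fact_ratio i y (m - y) hiy
        have hym : y + (m - y) = m := by omega
        rw [hym] at hfr
        have hfr' : (y.factorial:ℝ) * ((i + (m-y)).factorial:ℝ) ≤ (i.factorial:ℝ) * (m.factorial:ℝ) := by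
          exact_mod_cast hfr
        have e1 : (y.factorial:ℝ) * lam^(m+1) * (lam^i/(i.factorial:ℝ))
            = (y.factorial:ℝ) / (i.factorial:ℝ) * lam^(m+1+i) := by
          rw [pow_add]; ring
        have e2 : F ((m - y) + i) = (m.factorial:ℝ) / (((m-y)+i).factorial:ℝ) * lam^(m+1+i) := by
          rw [hF]
          have : lam^(y+1) * lam^((m-y)+i) = lam^(m+1+i) := by
            rw [← pow_add]; congr 1; omega
          rw [← this]; ring
        rw [e1, e2]
        apply mul_le_mul_of_nonneg_right _ (by positivity)
        rw [div_le_div_iff₀ (by positivity) (by positivity)]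
        calc (y.factorial:ℝ) * (((m-y)+i).factorial:ℝ)
            = (y.factorial:ℝ) * ((i + (m-y)).factorial:ℝ) := by rw [Nat.add_comm (m-y) i]
          _ ≤ (i.factorial:ℝ) * (m.factorial:ℝ) := hfr'
          _ = (m.factorial:ℝ) * (i.factorial:ℝ) := by ring
    _ = ∑ j ∈ Finset.Ico (m - y) (m + 1), F j := by
        have hc : m + 1 - (m - y) = y + 1 := by omega
        rw [Finset.sum_Ico_eq_sum_range, hc]
    _ ≤ ∑ j ∈ Finset.range (m+1), F j := by
        apply Finset.sum_le_sum_of_subset_of_nonneg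
        · intro j hj
          simp only [Finset.mem_Ico, Finset.mem_range] at *
          omega
        · intro j _ _; exact hFnn j

private lemma core2 (lam : ℝ) (hlam : 0 < lam) (ξ y : ℕ) (h : ξ ≤ y) :
    (y.factorial:ℝ) * lam^ξ * ∑' k : ℕ, lam^(k+(y+1))/((k+(y+1)).factorial:ℝ)
      ≤ (ξ.factorial:ℝ) * lam^y * ∑' k : ℕ, lam^(k+(ξ+1))/((k+(ξ+1)).factorial:ℝ) := by
  have hsum : ∀ n : ℕ, Summable (fun k : ℕ => lam^(k+n)/((k+n).factorial:ℝ)) := fun n =>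
    (summable_nat_add_iff n).mpr (Real.summable_pow_div_factorial lam)
  rw [← tsum_mul_left, ← tsum_mul_left]
  apply Summable.tsum_le_tsum _ (((hsum (y+1)).mul_left _)) (((hsum (ξ+1)).mul_left _))
  intro k
  have hfr := fact_ratio ξ y (k+1) h
  have hfr' : (y.factorial:ℝ) * ((k+(ξ+1)).factorial:ℝ) ≤ (ξ.factorial:ℝ) * ((k+(y+1)).factorial:ℝ) := by
    rw [show k+(ξ+1) = ξ+(k+1) from by omega, show k+(y+1) = y+(k+1) from by omega]
    exact_mod_cast hfr
  have e1 : (y.factorial:ℝ) * lam^ξ * (lam^(k+(y+1))/((k+(y+1)).factorial:ℝ))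
      = (y.factorial:ℝ) / ((k+(y+1)).factorial:ℝ) * lam^(ξ+(k+(y+1))) := by
    rw [pow_add]; ring
  have e2 : (ξ.factorial:ℝ) * lam^y * (lam^(k+(ξ+1))/((k+(ξ+1)).factorial:ℝ))
      = (ξ.factorial:ℝ) / ((k+(ξ+1)).factorial:ℝ) * lam^(ξ+(k+(y+1))) := by
    have : lam^y * lam^(k+(ξ+1)) = lam^(ξ+(k+(y+1))) := by
      rw [← pow_add]; congr 1; omega
    rw [← this]; ring
  rw [e1, e2]
  apply mul_le_mul_of_nonneg_right _ (by positivity)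
  rw [div_le_div_iff₀ (by positivity) (by positivity)]
  linarith [hfr']

private lemma key_form (lam : ℝ) (ξ : ℕ) (g : ℕ → ℝ) (hg0 : g 0 = 0)
    (hsteq : ∀ x : ℕ,
      lam * g (x + 1) - (x : ℝ) * g x = (if x = ξ then (1 : ℝ) else 0) - poisPmf lam ξ) :
    ∀ x : ℕ, lam ^ (x+1) * g (x+1)
      = (x.factorial : ℝ) * ((if ξ ≤ x then lam ^ ξ / (ξ.factorial : ℝ) else 0)
          - poisPmf lam ξ * ∑ i ∈ Finset.range (x+1), lam ^ i / (i.factorial : ℝ)) := by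
  intro x
  induction x with
  | zero =>
    have h0 := hsteq 0
    rw [hg0] at h0
    simp only [Nat.cast_zero, zero_mul, sub_zero] at h0
    by_cases hξ : ξ = 0
    · subst hξ; simp [h0]
    · rw [if_neg (Ne.symm hξ)] at h0
      simp [h0, hξ]
  | succ x ih =>
    have h1 := hsteq (x+1)
    have hgx2 : lam * g (x+2) = ((x:ℝ)+1) * g (x+1) + ((if x+1 = ξ then (1:ℝ) else 0) - poisPmf lam ξ) := by
      push_cast at h1
      linarith
    have e1 : lam ^ (x+2) * g (x+2) = lam ^ (x+1) * (lam * g (x+2)) := by ring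
    rw [e1, hgx2, Finset.sum_range_succ]
    have e2 : lam ^ (x+1) * (((x:ℝ)+1) * g (x+1) + ((if x+1 = ξ then (1:ℝ) else 0) - poisPmf lam ξ))
        = ((x:ℝ)+1) * (lam ^ (x+1) * g (x+1)) + lam ^ (x+1) * ((if x+1 = ξ then (1:ℝ) else 0) - poisPmf lam ξ) := by
      ring
    rw [e2, ih]
    have hfx : ((x+1).factorial : ℝ) = ((x:ℝ)+1) * (x.factorial : ℝ) := by
      rw [Nat.factorial_succ]; push_cast; ring
    have hx0 : (x.factorial : ℝ) ≠ 0 := by positivity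
    have hx1 : ((x:ℝ)+1) ≠ 0 := by positivity
    rcases lt_trichotomy ξ (x+1) with hlt | heq | hgt
    · rw [if_pos (by omega : ξ ≤ x), if_pos (by omega : ξ ≤ x+1), if_neg (by omega : ¬ x+1 = ξ), hfx]
      field_simp
      ring
    · subst heq
      rw [if_neg (by omega : ¬ x+1 ≤ x), if_pos (le_refl (x+1)), if_pos rfl, hfx]
      field_simp
      ring
    · rw [if_neg (by omega : ¬ ξ ≤ x), if_neg (by omega : ¬ ξ ≤ x+1), if_neg (by omega : ¬ x+1 = ξ), hfx]
      field_simp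
      ring

/-- Uniform bound on the solution of the Poisson Stein equation for point masses:
if `g(0) = 0` and `λ g(x+1) - x g(x) = 𝟙[x=ξ] - p(ξ)` for all `x ∈ ℕ`, then
`|g(x)| ≤ max(P(ξ-1)/ξ, (1-P(ξ))/λ)` (with the first term taken as `0` when `ξ = 0`). -/
theorem stmt10 (lam : ℝ) (hlam : 0 < lam) (ξ : ℕ) (g : ℕ → ℝ)
    (hg0 : g 0 = 0)
    (hsteq : ∀ x : ℕ,
      lam * g (x + 1) - (x : ℝ) * g x = (if x = ξ then (1 : ℝ) else 0) - poisPmf lam ξ) :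
    ∀ x : ℕ, |g x| ≤
      max (if ξ = 0 then 0 else poisCdf lam (ξ - 1) / (ξ : ℝ)) ((1 - poisCdf lam ξ) / lam) := by
  have hfsum : Summable (fun n : ℕ => lam^n/(n.factorial:ℝ)) := Real.summable_pow_div_factorial lam
  have hexp : Real.exp lam = ∑' n : ℕ, lam^n/(n.factorial:ℝ) := by
    rw [Real.exp_eq_exp_ℝ, NormedSpace.exp_eq_tsum_div]
  have htail : ∀ x : ℕ, Real.exp lam - ∑ i ∈ Finset.range (x+1), lam^i/(i.factorial:ℝ)
      = ∑' k : ℕ, lam^(k+(x+1))/((k+(x+1)).factorial:ℝ) := by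
    intro x
    have h := Summable.sum_add_tsum_nat_add (f := fun n : ℕ => lam^n/(n.factorial:ℝ)) (x+1) hfsum
    rw [hexp]
    linarith [h]
  have htail_nn : ∀ x : ℕ, 0 ≤ Real.exp lam - ∑ i ∈ Finset.range (x+1), lam^i/(i.factorial:ℝ) := by
    intro x
    rw [htail x]
    exact tsum_nonneg (fun k => by positivity)
  have hcdf : ∀ x : ℕ, poisCdf lam x
      = Real.exp (-lam) * ∑ i ∈ Finset.range (x+1), lam^i/(i.factorial:ℝ) := by
    intro x
    unfold poisCdf poisPmf
    rw [Finset.mul_sum]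
    exact Finset.sum_congr rfl (fun i _ => by rw [mul_div_assoc])
  have h1c : ∀ x : ℕ, 1 - poisCdf lam x
      = Real.exp (-lam) * (Real.exp lam - ∑ i ∈ Finset.range (x+1), lam^i/(i.factorial:ℝ)) := by
    intro x
    rw [hcdf x, mul_sub, Real.exp_neg, inv_mul_cancel₀ (ne_of_gt (Real.exp_pos lam))]
  have hB : 0 ≤ (1 - poisCdf lam ξ)/lam := by
    rw [h1c ξ]
    exact div_nonneg (mul_nonneg (Real.exp_pos _).le (htail_nn ξ)) hlam.le
  intro x
  cases x with
  | zero =>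
    rw [hg0, abs_zero]
    exact le_max_of_le_right hB
  | succ y =>
    have hkey := key_form lam ξ g hg0 hsteq y
    have hpow : (0:ℝ) < lam^(y+1) := pow_pos hlam _
    have hval : g (y+1) = ((y.factorial:ℝ) * ((if ξ ≤ y then lam^ξ/(ξ.factorial:ℝ) else 0)
        - poisPmf lam ξ * ∑ i ∈ Finset.range (y+1), lam^i/(i.factorial:ℝ))) / lam^(y+1) := by
      rw [eq_div_iff hpow.ne']
      linarith [hkey]
    have hp : 0 < poisPmf lam ξ := by unfold poisPmf; positivity
    by_cases hcase : ξ ≤ y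
    · -- g(y+1) ≥ 0 and bounded by the tail term
      rw [if_pos hcase] at hval
      have hIpos : lam^ξ/(ξ.factorial:ℝ) = poisPmf lam ξ * Real.exp lam := by
        unfold poisPmf
        rw [Real.exp_neg]
        field_simp
      have hval2 : g (y+1) = (y.factorial:ℝ) * poisPmf lam ξ
          * (Real.exp lam - ∑ i ∈ Finset.range (y+1), lam^i/(i.factorial:ℝ)) / lam^(y+1) := by
        rw [hval, hIpos]; ring
      have hgnn : 0 ≤ g (y+1) := by
        rw [hval2]
        exact div_nonneg (mul_nonneg (mul_nonneg (by positivity) hp.le) (htail_nn y)) hpow.le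
      rw [abs_of_nonneg hgnn, hval2]
      apply le_max_of_le_right
      rw [h1c ξ, div_le_div_iff₀ hpow hlam]
      have hcore : (y.factorial:ℝ)*lam^ξ*(Real.exp lam - ∑ i ∈ Finset.range (y+1), lam^i/(i.factorial:ℝ))
          ≤ (ξ.factorial:ℝ)*lam^y*(Real.exp lam - ∑ i ∈ Finset.range (ξ+1), lam^i/(i.factorial:ℝ)) := by
        rw [htail y, htail ξ]
        exact core2 lam hlam ξ y hcase
      have hξf : (0:ℝ) < (ξ.factorial:ℝ) := by positivity
      unfold poisPmf
      calc (y.factorial:ℝ) * (Real.exp (-lam) * lam^ξ / (ξ.factorial:ℝ))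
            * (Real.exp lam - ∑ i ∈ Finset.range (y+1), lam^i/(i.factorial:ℝ)) * lam
          = (Real.exp (-lam) * lam / (ξ.factorial:ℝ))
            * ((y.factorial:ℝ) * lam^ξ * (Real.exp lam - ∑ i ∈ Finset.range (y+1), lam^i/(i.factorial:ℝ))) := by
            ring
        _ ≤ (Real.exp (-lam) * lam / (ξ.factorial:ℝ))
            * ((ξ.factorial:ℝ) * lam^y * (Real.exp lam - ∑ i ∈ Finset.range (ξ+1), lam^i/(i.factorial:ℝ))) := by
            exact mul_le_mul_of_nonneg_left hcore (by positivity)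
        _ = Real.exp (-lam) * (Real.exp lam - ∑ i ∈ Finset.range (ξ+1), lam^i/(i.factorial:ℝ)) * lam^(y+1) := by
            field_simp
            ring
    · -- y < ξ : g(y+1) ≤ 0, bounded by the cdf term
      have hξ0 : ξ ≠ 0 := by omega
      obtain ⟨m, rfl⟩ : ∃ m, ξ = m + 1 := ⟨ξ-1, by omega⟩
      rw [if_neg hcase] at hval
      have hSnn : 0 ≤ ∑ i ∈ Finset.range (y+1), lam^i/(i.factorial:ℝ) :=
        Finset.sum_nonneg (fun i _ => by positivity)
      have hgle : g (y+1) ≤ 0 := by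
        rw [hval]
        apply div_nonpos_of_nonpos_of_nonneg _ hpow.le
        have : (0:ℝ) ≤ poisPmf lam (m+1) * ∑ i ∈ Finset.range (y+1), lam^i/(i.factorial:ℝ) :=
          mul_nonneg hp.le hSnn
        have hyf : (0:ℝ) ≤ (y.factorial:ℝ) := by positivity
        nlinarith [this, hyf]
      rw [abs_of_nonpos hgle, hval]
      apply le_max_of_le_left
      rw [if_neg hξ0, show (m+1) - 1 = m from rfl, hcdf m]
      have hneg : -((y.factorial:ℝ) * ((0:ℝ)
          - poisPmf lam (m+1) * ∑ i ∈ Finset.range (y+1), lam^i/(i.factorial:ℝ)) / lam^(y+1))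
          = (y.factorial:ℝ) * poisPmf lam (m+1)
            * (∑ i ∈ Finset.range (y+1), lam^i/(i.factorial:ℝ)) / lam^(y+1) := by
        ring
      rw [hneg, div_le_div_iff₀ hpow (by positivity : (0:ℝ) < ((m+1:ℕ):ℝ))]
      have hcore := core1 lam hlam y m (by omega : y ≤ m)
      unfold poisPmf
      have hfs : ((m+1).factorial : ℝ) = ((m:ℝ)+1) * (m.factorial:ℝ) := by
        rw [Nat.factorial_succ]; push_cast; ring
      have hmf : (0:ℝ) < (m.factorial:ℝ) := by positivity
      calc (y.factorial:ℝ) * (Real.exp (-lam) * lam^(m+1) / ((m+1).factorial:ℝ))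
            * (∑ i ∈ Finset.range (y+1), lam^i/(i.factorial:ℝ)) * ((m+1:ℕ):ℝ)
          = (Real.exp (-lam) * ((m+1:ℕ):ℝ) / ((m+1).factorial:ℝ))
            * ((y.factorial:ℝ) * lam^(m+1) * ∑ i ∈ Finset.range (y+1), lam^i/(i.factorial:ℝ)) := by
            ring
        _ ≤ (Real.exp (-lam) * ((m+1:ℕ):ℝ) / ((m+1).factorial:ℝ))
            * ((m.factorial:ℝ) * lam^(y+1) * ∑ j ∈ Finset.range (m+1), lam^j/(j.factorial:ℝ)) := by
            exact mul_le_mul_of_nonneg_left hcore (by positivity)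
        _ = Real.exp (-lam) * (∑ j ∈ Finset.range (m+1), lam^j/(j.factorial:ℝ)) * lam^(y+1) := by
            rw [hfs]
            push_cast
            field_simp
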